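/- Let T be a sublinear operator of weak type (1,1) with constant ‖T‖_{L¹→L^{1,∞}}, and let Q₀ ⊂ ℝⁿ be a cube. Define the local grand maximal truncated operator M_{T,Q₀}f(x) = sup over cubes Q with x ∈ Q ⊆ Q₀ of the essential supremum over ξ ∈ Q of |T(f·χ_{3Q₀∖3Q})(ξ)|. Then for almost every x ∈ Q₀, |T(f·χ_{3Q₀})(x)| ≤ c_n ‖T‖_{L¹→L^{1,∞}} |f(x)| + M_{T,Q₀}f(x). -/

import Mathlib

noncomputable section
open MeasureTheory ENNReal Set

structure Cube (n : ℕ) where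
  corner : Fin n → ℝ
  side : ℝ
  side_pos : 0 < side

def Cube.set {n : ℕ} (Q : Cube n) : Set (Fin n → ℝ) :=
  {x | ∀ i, Q.corner i ≤ x i ∧ x i < Q.corner i + Q.side}

def Cube.triple {n : ℕ} (Q : Cube n) : Cube n :=
  ⟨fun i => Q.corner i - Q.side, 3 * Q.side, by linarith [Q.side_pos]⟩

/-- The local grand maximal truncated operator
`M_{T,Q₀} f (x) = sup_{x ∈ Q ⊆ Q₀} ess sup_{ξ ∈ Q} |T(f χ_{3Q₀∖3Q})(ξ)|`. -/
def localGrandMaximal {n : ℕ} (T : ((Fin n → ℝ) → ℂ) → (Fin n → ℝ) → ℂ)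
    (Q₀ : Cube n) (f : (Fin n → ℝ) → ℂ) (x : Fin n → ℝ) : ℝ≥0∞ :=
  ⨆ Q : Cube n, ⨆ (_ : x ∈ Q.set ∧ Q.set ⊆ Q₀.set),
    essSup (fun ξ => (‖T ((Q₀.triple.set \ Q.triple.set).indicator f) ξ‖₊ : ℝ≥0∞))
      (volume.restrict Q.set)


open Filter Topology

section AuxLemmas

namespace Cube
variable {n : ℕ}

lemma set_eq (Q : Cube n) :
    Q.set = Set.pi Set.univ (fun i => Set.Ico (Q.corner i) (Q.corner i + Q.side)) := by
  ext x; simp [Cube.set, Set.mem_pi, Set.mem_Ico]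

lemma measurableSet_set (Q : Cube n) : MeasurableSet Q.set := by
  rw [set_eq]
  exact MeasurableSet.univ_pi fun i => measurableSet_Ico

lemma volume_set (Q : Cube n) : volume Q.set = ENNReal.ofReal (Q.side ^ n) := by
  rw [set_eq, volume_pi_pi]
  simp [Real.volume_Ico, ENNReal.ofReal_pow Q.side_pos.le]

lemma corner_mem (Q : Cube n) : Q.corner ∈ Q.set :=
  fun i => ⟨le_rfl, by linarith [Q.side_pos]⟩

lemma coord_bounds {Q Q₀ : Cube n} (h : Q.set ⊆ Q₀.set) (i : Fin n) :
    Q₀.corner i ≤ Q.corner i ∧ Q.corner i + Q.side ≤ Q₀.corner i + Q₀.side := by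
  have h1 := h Q.corner_mem i
  refine ⟨h1.1, ?_⟩
  by_contra hc
  push_neg at hc
  set δ : ℝ := min Q.side (Q.corner i + Q.side - (Q₀.corner i + Q₀.side)) with hδ
  have hδpos : 0 < δ := lt_min Q.side_pos (by linarith)
  have hδle : δ ≤ Q.side := min_le_left _ _
  have hmem : (fun j => Q.corner j + Q.side - δ) ∈ Q.set := by
    intro j
    refine ⟨?_, ?_⟩ <;> simp only <;> linarith
  have := (h hmem i).2
  have hδle2 : δ ≤ Q.corner i + Q.side - (Q₀.corner i + Q₀.side) := min_le_right _ _
  linarith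

lemma side_le {Q Q₀ : Cube n} (h : Q.set ⊆ Q₀.set) (i : Fin n) : Q.side ≤ Q₀.side := by
  have := coord_bounds h i
  linarith [this.1, this.2]

lemma triple_subset_triple {Q Q₀ : Cube n} (h : Q.set ⊆ Q₀.set) :
    Q.triple.set ⊆ Q₀.triple.set := by
  intro y hy i
  have hb := coord_bounds h i
  have hs : Q.side ≤ Q₀.side := by linarith [hb.1, hb.2]
  have := hy i
  simp only [Cube.triple, Cube.set] at this ⊢
  constructor <;> [linarith [this.1]; linarith [this.2]]

lemma subset_triple (Q : Cube n) : Q.set ⊆ Q.triple.set := by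
  intro y hy i
  have := hy i
  simp only [Cube.triple, Cube.set] at this ⊢
  have := Q.side_pos
  constructor <;> [linarith; linarith]

lemma triple_subset_closedBall (Q : Cube n) :
    Q.triple.set ⊆ Metric.closedBall Q.corner (2 * Q.side) := by
  intro y hy
  rw [Metric.mem_closedBall, dist_pi_le_iff (by linarith [Q.side_pos])]
  intro i
  have := hy i
  simp only [Cube.triple, Cube.set] at this
  rw [Real.dist_eq, abs_le]
  constructor <;> [linarith [this.1]; linarith [this.2]]

lemma exists_subcube {Q₀ : Cube n} {x : Fin n → ℝ} (hx : x ∈ Q₀.set) {s : ℝ}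
    (hs : 0 < s) (hs' : s ≤ Q₀.side) :
    ∃ Q : Cube n, Q.side = s ∧ x ∈ Q.set ∧ Q.set ⊆ Q₀.set ∧
      Q.triple.set ⊆ Metric.closedBall x (2 * s) := by
  have hxm : ∀ i, min (x i) (Q₀.corner i + Q₀.side - s) ≤ x i ∧
      x i < min (x i) (Q₀.corner i + Q₀.side - s) + s := by
    intro i
    refine ⟨min_le_left _ _, ?_⟩
    rcases le_or_gt (x i) (Q₀.corner i + Q₀.side - s) with h | h
    · rw [min_eq_left h]; linarith
    · rw [min_eq_right h.le]; linarith [(hx i).2]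
  refine ⟨⟨fun i => min (x i) (Q₀.corner i + Q₀.side - s), s, hs⟩, rfl, ?_, ?_, ?_⟩
  · intro i
    exact ⟨(hxm i).1, (hxm i).2⟩
  · intro y hy i
    have := hy i
    simp only at this
    have h1 : Q₀.corner i ≤ min (x i) (Q₀.corner i + Q₀.side - s) :=
      le_min (hx i).1 (by linarith)
    have h2 : min (x i) (Q₀.corner i + Q₀.side - s) ≤ Q₀.corner i + Q₀.side - s :=
      min_le_right _ _
    exact ⟨by linarith [this.1], by linarith [this.2]⟩
  · intro y hy
    rw [Metric.mem_closedBall, dist_pi_le_iff (by linarith)]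
    intro i
    have := hy i
    simp only [Cube.triple, Cube.set] at this
    have h1 := (hxm i).1
    have h2 := (hxm i).2
    rw [Real.dist_eq, abs_le]
    constructor <;> [linarith [this.1]; linarith [this.2]]

end Cube

lemma volume_closedBall_pi {n : ℕ} (x : Fin n → ℝ) {r : ℝ} (hr : 0 ≤ r) :
    volume (Metric.closedBall x r) = ENNReal.ofReal ((2 * r) ^ n) := by
  rw [closedBall_pi _ hr]
  rw [volume_pi_pi]
  simp [Real.closedBall_eq_Icc, Real.volume_Icc, ENNReal.ofReal_pow (by linarith : (0:ℝ) ≤ 2*r)]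
  congr 1
  ring_nf
  rw [ENNReal.ofReal_mul hr, ENNReal.ofReal_ofNat]


lemma integrableOn_triple {n : ℕ} {f : (Fin n → ℝ) → ℂ} (hf : LocallyIntegrable f volume)
    (Q : Cube n) : IntegrableOn f Q.triple.set volume :=
  (hf.integrableOn_isCompact (isCompact_closedBall Q.corner (2 * Q.side))).mono_set
    Q.triple_subset_closedBall

lemma key_estimate {n : ℕ} (T : ((Fin n → ℝ) → ℂ) → (Fin n → ℝ) → ℂ) (CT : ℝ) (hCT : 0 ≤ CT)
    (hsub : ∀ f g : (Fin n → ℝ) → ℂ, Integrable f → Integrable g →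
      ∀ x, ‖T (f + g) x‖ ≤ ‖T f x‖ + ‖T g x‖)
    (hweak : ∀ (f : (Fin n → ℝ) → ℂ), Integrable f → ∀ lam : ℝ, 0 < lam →
      ENNReal.ofReal lam * volume {x | lam < ‖T f x‖} ≤ ENNReal.ofReal CT * ∫⁻ y, ‖f y‖₊)
    (Q₀ : Cube n) (f : (Fin n → ℝ) → ℂ) (hf : LocallyIntegrable f volume)
    {x : Fin n → ℝ} (hx : x ∈ Q₀.set)
    (havg : Tendsto (fun s : ℝ => ⨍ y in Metric.closedBall x (2*s), ‖f y‖) (𝓝[>] 0) (𝓝 ‖f x‖))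
    (q : ℚ) (m : ℕ)
    (hq : ENNReal.ofReal (2 * 4^n * CT) * ‖f x‖₊ + localGrandMaximal T Q₀ f x
        + ENNReal.ofReal (1/(m+1)) < ENNReal.ofReal (q:ℝ)) :
    ∀ᶠ s in 𝓝[>] (0:ℝ), ∃ Q : Cube n, Q.side = s ∧ x ∈ Q.set ∧
      Q.triple.set ⊆ Metric.closedBall x (2*s) ∧
      volume ({ξ | ENNReal.ofReal (q:ℝ) < (‖T (Q₀.triple.set.indicator f) ξ‖₊ : ℝ≥0∞)} ∩ Q.set)
        ≤ ENNReal.ofReal (s^n/2) := by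
  set Mx := localGrandMaximal T Q₀ f x with hMx
  have h1 : ∀ᶠ s in 𝓝[>] (0:ℝ), 0 < s := eventually_mem_nhdsWithin
  have h2 : ∀ᶠ s in 𝓝[>] (0:ℝ), s ≤ Q₀.side :=
    Filter.eventually_of_mem (Ioc_mem_nhdsGT_of_mem ⟨le_rfl, Q₀.side_pos⟩) fun s hs => hs.2
  have hmpos : (0:ℝ) < 1/(2*((m:ℝ)+1)) := by positivity
  have h3 : ∀ᶠ s in 𝓝[>] (0:ℝ),
      2*4^n*CT*(⨍ y in Metric.closedBall x (2*s), ‖f y‖) < 2*4^n*CT*‖f x‖ + 1/(2*((m:ℝ)+1)) := by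
    have hT := havg.const_mul (2*4^n*CT)
    exact hT.eventually (gt_mem_nhds (lt_add_of_pos_right _ hmpos))
  filter_upwards [h1, h2, h3] with s hs hsle havgs
  obtain ⟨Q, hside, hxQ, hQsub, hQball⟩ := Cube.exists_subcube hx hs hsle
  refine ⟨Q, hside, hxQ, hQball, ?_⟩
  set f1 := Q.triple.set.indicator f with hf1def
  set f2 := (Q₀.triple.set \ Q.triple.set).indicator f with hf2def
  have hint3Q : IntegrableOn f Q.triple.set volume := integrableOn_triple hf Q
  have hint3Q0 : IntegrableOn f Q₀.triple.set volume := integrableOn_triple hf Q₀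
  have hf1i : Integrable f1 := hint3Q.integrable_indicator Q.triple.measurableSet_set
  have hf2i : Integrable f2 := (hint3Q0.mono_set diff_subset).integrable_indicator
    ((Q₀.triple.measurableSet_set).diff Q.triple.measurableSet_set)
  have htrip : Q.triple.set ⊆ Q₀.triple.set := Cube.triple_subset_triple hQsub
  have hsplit : f1 + f2 = Q₀.triple.set.indicator f := by
    funext ξ
    simp only [Pi.add_apply, hf1def, hf2def, Set.indicator_apply, Set.mem_diff]
    by_cases hm1 : ξ ∈ Q.triple.set
    · simp [hm1, htrip hm1]
    · by_cases hm2 : ξ ∈ Q₀.triple.set <;> simp [hm1, hm2]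
  set V := s ^ n with hV
  have hVpos : 0 < V := pow_pos hs n
  set I1 := ∫⁻ y in Q.triple.set, (‖f y‖₊ : ℝ≥0∞) with hI1
  have hI1top : I1 ≠ ⊤ := hint3Q.2.ne
  set J := I1.toReal with hJ
  have hJ0 : 0 ≤ J := ENNReal.toReal_nonneg
  set lam := 2*CT*J/V + 1/(2*((m:ℝ)+1)) with hlamdef
  have hlam : 0 < lam := by positivity
  have hw := hweak f1 hf1i lam hlam
  have hlint : (∫⁻ y, (‖f1 y‖₊ : ℝ≥0∞)) = I1 := by
    rw [hI1, ← lintegral_indicator Q.triple.measurableSet_set]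
    congr 1; funext y
    by_cases hy : y ∈ Q.triple.set <;> simp [hf1def, Set.indicator_apply, hy]
  have hS1 : volume {ξ | lam < ‖T f1 ξ‖} ≤ ENNReal.ofReal (V/2) := by
    rw [hlint] at hw
    have hJlam : CT * J ≤ lam * (V/2) := by
      have h0 : 2*CT*J/V * (V/2) = CT*J := by field_simp
      have h1 : 2*CT*J/V ≤ lam := by rw [hlamdef]; linarith
      calc CT*J = 2*CT*J/V*(V/2) := h0.symm
        _ ≤ lam*(V/2) := mul_le_mul_of_nonneg_right h1 (by positivity)
    have h5 : ENNReal.ofReal CT * I1 ≤ ENNReal.ofReal lam * ENNReal.ofReal (V/2) := by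
      rw [← ENNReal.ofReal_toReal hI1top, ← hJ, ← ENNReal.ofReal_mul hCT,
        ← ENNReal.ofReal_mul hlam.le]
      exact ENNReal.ofReal_le_ofReal hJlam
    have h6 := hw.trans h5
    rwa [ENNReal.mul_le_mul_iff_right (by simp [ENNReal.ofReal_eq_zero, not_le, hlam])
      ENNReal.ofReal_ne_top] at h6
  have hess : essSup (fun ξ => (‖T f2 ξ‖₊ : ℝ≥0∞)) (volume.restrict Q.set) ≤ Mx := by
    rw [hMx]
    unfold localGrandMaximal
    exact le_iSup_of_le Q (le_iSup_of_le ⟨hxQ, hQsub⟩ le_rfl)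
  have hMae : ∀ᵐ ξ ∂(volume.restrict Q.set), (‖T f2 ξ‖₊ : ℝ≥0∞) ≤ Mx := by
    filter_upwards [ae_le_essSup (fun ξ => (‖T f2 ξ‖₊ : ℝ≥0∞))] with ξ hξ
    exact hξ.trans hess
  set N := {ξ | ¬ (‖T f2 ξ‖₊ : ℝ≥0∞) ≤ Mx} with hNdef
  have hN : volume (N ∩ Q.set) = 0 := by
    have := ae_iff.mp hMae
    rwa [Measure.restrict_apply' Q.measurableSet_set] at this
  -- threshold bound
  have hlamq : ENNReal.ofReal lam + Mx ≤ ENNReal.ofReal (q:ℝ) := by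
    set A := ⨍ y in Metric.closedBall x (2*s), ‖f y‖ with hA
    have hintcB : IntegrableOn f (Metric.closedBall x (2*s)) volume :=
      hf.integrableOn_isCompact (isCompact_closedBall _ _)
    have hI1le : I1 ≤ ∫⁻ y in Metric.closedBall x (2*s), (‖f y‖₊ : ℝ≥0∞) :=
      lintegral_mono_set hQball
    have hcBlint : (∫⁻ y in Metric.closedBall x (2*s), (‖f y‖₊ : ℝ≥0∞))
        = ENNReal.ofReal (∫ y in Metric.closedBall x (2*s), ‖f y‖) :=
      (ofReal_integral_norm_eq_lintegral_enorm hintcB).symm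
    have hintnonneg : 0 ≤ ∫ y in Metric.closedBall x (2*s), ‖f y‖ :=
      integral_nonneg fun y => norm_nonneg _
    have hJle : J ≤ ∫ y in Metric.closedBall x (2*s), ‖f y‖ := by
      have h7 := ENNReal.toReal_mono (by simp [ENNReal.ofReal_ne_top])
        (hI1le.trans_eq hcBlint)
      rwa [ENNReal.toReal_ofReal hintnonneg] at h7
    have hcBvol : (volume (Metric.closedBall x (2*s))).toReal = (4*s)^n := by
      rw [volume_closedBall_pi x (by linarith), ENNReal.toReal_ofReal (by positivity)]
      ring_nf
    have hintA : (∫ y in Metric.closedBall x (2*s), ‖f y‖) = (4*s)^n * A := by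
      have h4s : ((4:ℝ)*s)^n ≠ 0 := by positivity
      rw [hA, setAverage_eq, smul_eq_mul, measureReal_def, hcBvol]
      field_simp
    have hA0 : 0 ≤ A := by
      rw [hA, setAverage_eq, smul_eq_mul]
      positivity
    have hlamle : lam ≤ 2*4^n*CT*‖f x‖ + 1/((m:ℝ)+1) := by
      have h2CTJ : 2*CT*J/V ≤ 2*4^n*CT*A := by
        have h8 : J ≤ (4*s)^n * A := hJle.trans_eq hintA
        have h9 : 2*CT*J ≤ 2*CT*((4*s)^n*A) :=
          mul_le_mul_of_nonneg_left h8 (by positivity)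
        have h10 : 2*CT*J/V ≤ 2*CT*((4*s)^n*A)/V := by gcongr
        have h11 : 2*CT*((4*s)^n*A)/V = 2*4^n*CT*A := by
          rw [mul_pow, hV]; field_simp
        linarith [h10, h11.le]
      have hhalf : 1/(2*((m:ℝ)+1)) + 1/(2*((m:ℝ)+1)) = 1/((m:ℝ)+1) := by
        have h12 : ((m:ℝ)+1) ≠ 0 := by positivity
        field_simp
        norm_num
      calc lam = 2*CT*J/V + 1/(2*((m:ℝ)+1)) := hlamdef
        _ ≤ 2*4^n*CT*A + 1/(2*((m:ℝ)+1)) := by linarith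
        _ ≤ 2*4^n*CT*‖f x‖ + 1/(2*((m:ℝ)+1)) + 1/(2*((m:ℝ)+1)) := by
            linarith [havgs]
        _ = 2*4^n*CT*‖f x‖ + 1/((m:ℝ)+1) := by rw [add_assoc, hhalf]
    calc ENNReal.ofReal lam + Mx
        ≤ ENNReal.ofReal (2*4^n*CT*‖f x‖ + 1/((m:ℝ)+1)) + Mx :=
          add_le_add_left (ENNReal.ofReal_le_ofReal hlamle) _
      _ = ENNReal.ofReal (2*4^n*CT) * (‖f x‖₊ : ℝ≥0∞) + ENNReal.ofReal (1/((m:ℝ)+1)) + Mx := by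
          rw [ENNReal.ofReal_add (by positivity) (by positivity),
            ENNReal.ofReal_mul (by positivity), ofReal_norm, enorm_eq_nnnorm]
      _ = ENNReal.ofReal (2*4^n*CT) * (‖f x‖₊ : ℝ≥0∞) + Mx + ENNReal.ofReal (1/((m:ℝ)+1)) := by
          ring
      _ ≤ ENNReal.ofReal (q:ℝ) := by
          have := hq
          push_cast at this ⊢
          exact this.le
  -- the inclusion
  have hincl : {ξ | ENNReal.ofReal (q:ℝ) < (‖T (Q₀.triple.set.indicator f) ξ‖₊ : ℝ≥0∞)} ∩ Q.set
      ⊆ {ξ | lam < ‖T f1 ξ‖} ∪ (N ∩ Q.set) := by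
    rintro ξ ⟨hgξ, hξQ⟩
    rw [Set.mem_union]
    by_contra hcon
    push_neg at hcon
    have hc1 : ‖T f1 ξ‖ ≤ lam := not_lt.mp (hcon.1)
    have hc2 : (‖T f2 ξ‖₊ : ℝ≥0∞) ≤ Mx := by
      have := hcon.2
      rw [Set.mem_inter_iff] at this
      push_neg at this
      have := this
      by_contra hcc
      exact absurd hξQ (fun hq2 => (this (by exact hcc)) hq2)
    have hsubξ := hsub f1 f2 hf1i hf2i ξ
    rw [hsplit] at hsubξ
    have hle : (‖T (Q₀.triple.set.indicator f) ξ‖₊ : ℝ≥0∞) ≤ ENNReal.ofReal lam + Mx := by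
      calc (‖T (Q₀.triple.set.indicator f) ξ‖₊ : ℝ≥0∞)
          = ENNReal.ofReal ‖T (Q₀.triple.set.indicator f) ξ‖ :=
            (ofReal_norm _).symm
        _ ≤ ENNReal.ofReal (‖T f1 ξ‖ + ‖T f2 ξ‖) := ENNReal.ofReal_le_ofReal hsubξ
        _ = ENNReal.ofReal ‖T f1 ξ‖ + ENNReal.ofReal ‖T f2 ξ‖ :=
            ENNReal.ofReal_add (norm_nonneg _) (norm_nonneg _)
        _ ≤ ENNReal.ofReal lam + Mx := by
            refine add_le_add (ENNReal.ofReal_le_ofReal hc1) ?_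
            rw [ofReal_norm]; exact hc2
    exact absurd (hgξ.trans_le (hle.trans hlamq)) (lt_irrefl _)
  calc volume ({ξ | ENNReal.ofReal (q:ℝ) < (‖T (Q₀.triple.set.indicator f) ξ‖₊ : ℝ≥0∞)} ∩ Q.set)
      ≤ volume ({ξ | lam < ‖T f1 ξ‖} ∪ (N ∩ Q.set)) := measure_mono hincl
    _ ≤ volume {ξ | lam < ‖T f1 ξ‖} + volume (N ∩ Q.set) := measure_union_le _ _
    _ ≤ ENNReal.ofReal (V/2) + 0 := add_le_add hS1 hN.le
    _ = ENNReal.ofReal (s^n/2) := by rw [add_zero, hV]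

lemma tendsto_const_mul_nhdsWithin_Ioi {c : ℝ} (hc : 0 < c) :
    Tendsto (fun s : ℝ => c * s) (𝓝[>] 0) (𝓝[>] 0) := by
  rw [tendsto_nhdsWithin_iff]
  constructor
  · have h0 : Tendsto (fun s : ℝ => c * s) (𝓝 0) (𝓝 (c * 0)) :=
      (continuous_const.mul continuous_id).tendsto 0
    rw [mul_zero] at h0
    exact h0.mono_left nhdsWithin_le_nhds
  · filter_upwards [eventually_mem_nhdsWithin] with s hs
    exact mul_pos hc hs

lemma density_null {n : ℕ} (g : (Fin n → ℝ) → ℝ≥0∞) (B : Set (Fin n → ℝ)) (q : ℚ)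
    (hBg : ∀ x ∈ B, ENNReal.ofReal (q:ℝ) < g x)
    (hB : ∀ x ∈ B, ∀ᶠ s in 𝓝[>] (0:ℝ), ∃ Q : Cube n, Q.side = s ∧ x ∈ Q.set ∧
      Q.triple.set ⊆ Metric.closedBall x (2*s) ∧
      volume ({ξ | ENNReal.ofReal (q:ℝ) < g ξ} ∩ Q.set) ≤ ENNReal.ofReal (s^n/2)) :
    volume B = 0 := by
  set H := toMeasurable volume B with hH
  have hdens := Besicovitch.ae_tendsto_measure_inter_div volume H
  set ρ : ℝ≥0∞ := ENNReal.ofReal (1 - 1/2^(2*n+1)) with hρdef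
  have h2npos : (0:ℝ) < 1/2^(2*n+1) := by positivity
  have hρ : ρ < 1 := by
    rw [hρdef, ENNReal.ofReal_lt_one]; linarith
  have hbad : ∀ x ∈ B, ¬ Tendsto (fun r => volume (H ∩ Metric.closedBall x r)
      / volume (Metric.closedBall x r)) (𝓝[>] 0) (𝓝 1) := by
    intro x hxB hT
    have hhalf : Tendsto (fun r : ℝ => r / 2) (𝓝[>] 0) (𝓝[>] 0) := by
      have := tendsto_const_mul_nhdsWithin_Ioi (show (0:ℝ) < 1/2 by norm_num)
      convert this using 2 with r
      ring
    have hev := hhalf.eventually (hB x hxB)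
    have hbound : ∀ᶠ r in 𝓝[>] (0:ℝ), volume (H ∩ Metric.closedBall x r)
        / volume (Metric.closedBall x r) ≤ ρ := by
      filter_upwards [hev, eventually_mem_nhdsWithin] with r hr hrpos
      obtain ⟨Q, hside, hxQ, hQball, hQvol⟩ := hr
      have hr2 : (0:ℝ) < r := hrpos
      have hQball' : Q.triple.set ⊆ Metric.closedBall x r := by
        have he : 2*(r/2) = r := by ring
        rwa [he] at hQball
      have hQcb : Q.set ⊆ Metric.closedBall x r := (Q.subset_triple).trans hQball'
      have hvolQ : volume Q.set = ENNReal.ofReal ((r/2)^n) := by rw [Q.volume_set, hside]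
      have hvolcB : volume (Metric.closedBall x r) = ENNReal.ofReal ((2*r)^n) :=
        volume_closedBall_pi x hr2.le
      have hrineq : (2*r)^n - (r/2)^n + (r/2)^n/2 ≤ (1 - 1/2^(2*n+1)) * (2*r)^n := by
        have h2n : (2:ℝ)^(2*n+1) = 2^n * 2^n * 2 := by
          rw [pow_succ, two_mul, pow_add]
        have h2pn : ((2:ℝ)^n) ≠ 0 := by positivity
        rw [h2n, mul_pow, div_pow]
        field_simp
        ring_nf
        nlinarith [pow_pos hr2 n, pow_pos (show (0:ℝ) < 2 by norm_num) n]
      have hmain : volume (H ∩ Metric.closedBall x r)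
          ≤ ρ * volume (Metric.closedBall x r) := by
        rw [hH, Measure.measure_toMeasurable_inter_of_sFinite Metric.isClosed_closedBall.measurableSet B]
        calc volume (B ∩ Metric.closedBall x r)
            ≤ volume ((B ∩ Q.set) ∪ (Metric.closedBall x r \ Q.set)) := by
              refine measure_mono ?_
              rintro y ⟨hyB, hycb⟩
              by_cases h : y ∈ Q.set
              exacts [Or.inl ⟨hyB, h⟩, Or.inr ⟨hycb, h⟩]
          _ ≤ volume (B ∩ Q.set) + volume (Metric.closedBall x r \ Q.set) :=
              measure_union_le _ _
          _ ≤ ENNReal.ofReal ((r/2)^n/2)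
              + (ENNReal.ofReal ((2*r)^n) - ENNReal.ofReal ((r/2)^n)) := by
              refine add_le_add ?_ ?_
              · refine (measure_mono ?_).trans hQvol
                rintro y ⟨hyB, hyQ⟩
                exact ⟨hBg y hyB, hyQ⟩
              · rw [measure_diff hQcb Q.measurableSet_set.nullMeasurableSet
                  (by rw [hvolQ]; exact ofReal_ne_top), hvolQ, hvolcB]
          _ ≤ ρ * ENNReal.ofReal ((2*r)^n) := by
              have hp1 : (0:ℝ) ≤ (r/2)^n := pow_nonneg (by linarith) n
              have hp2 : (r/2)^n ≤ (2*r)^n :=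
                pow_le_pow_left₀ (by linarith) (by linarith) n
              have hp3 : (0:ℝ) ≤ 1 - 1/2^(2*n+1) := by
                have h14 : (1:ℝ) ≤ 2^(2*n+1) := one_le_pow₀ (by norm_num)
                have h15 : (1:ℝ)/2^(2*n+1) ≤ 1 := by
                  rw [div_le_one (by positivity)]; exact h14
                linarith
              rw [← ENNReal.ofReal_sub _ hp1, ← ENNReal.ofReal_add (by positivity)
                (by linarith), hρdef, ← ENNReal.ofReal_mul hp3]
              apply ENNReal.ofReal_le_ofReal
              linarith [hrineq]
          _ = ρ * volume (Metric.closedBall x r) := by rw [hvolcB]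
      exact ENNReal.div_le_of_le_mul hmain
    have hcontra := (hT.eventually (lt_mem_nhds hρ)).and hbound
    obtain ⟨r, hr1, hr2⟩ := hcontra.exists
    exact absurd (hr1.trans_le hr2) (lt_irrefl _)
  have hnull := ae_iff.mp hdens
  rw [Measure.restrict_apply' (measurableSet_toMeasurable _ _)] at hnull
  exact measure_mono_null
    (fun x hxB => Set.mem_inter (hbad x hxB) (subset_toMeasurable _ _ hxB)) hnull


end AuxLemmas

/-- if `T` is sublinear and of weak type `(1,1)` with constant `C_T`, then
for a.e. `x ∈ Q₀`, `|T(f χ_{3Q₀})(x)| ≤ c_n C_T |f(x)| + M_{T,Q₀} f (x)`. -/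
theorem local_pointwise_bound (n : ℕ) :
    ∃ c : ℝ, 0 < c ∧
      ∀ (T : ((Fin n → ℝ) → ℂ) → (Fin n → ℝ) → ℂ) (CT : ℝ), 0 ≤ CT →
        (∀ f g : (Fin n → ℝ) → ℂ, Integrable f → Integrable g →
          ∀ x, ‖T (f + g) x‖ ≤ ‖T f x‖ + ‖T g x‖) →
        (∀ (f : (Fin n → ℝ) → ℂ), Integrable f → ∀ lam : ℝ, 0 < lam →
          ENNReal.ofReal lam * volume {x | lam < ‖T f x‖} ≤
            ENNReal.ofReal CT * ∫⁻ y, ‖f y‖₊) →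
      ∀ (Q₀ : Cube n) (f : (Fin n → ℝ) → ℂ), LocallyIntegrable f →
        ∀ᵐ x : Fin n → ℝ, x ∈ Q₀.set →
          (‖T (Q₀.triple.set.indicator f) x‖₊ : ℝ≥0∞) ≤
            ENNReal.ofReal (c * CT) * ‖f x‖₊ + localGrandMaximal T Q₀ f x := by
  refine ⟨2 * 4^n, by positivity, ?_⟩
  intro T CT hCT hsub hweak Q₀ f hf
  have havg : ∀ᵐ x : Fin n → ℝ, Tendsto (fun s : ℝ => ⨍ y in Metric.closedBall x (2*s), ‖f y‖)
      (𝓝[>] 0) (𝓝 ‖f x‖) := by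
    have hfn : LocallyIntegrable (fun y => ‖f y‖) volume := by
      intro z
      obtain ⟨s, hs, hint⟩ := hf z
      exact ⟨s, hs, hint.norm⟩
    filter_upwards [IsUnifLocDoublingMeasure.ae_tendsto_average (μ := volume) hfn 2]
      with x hx
    refine hx (fun _ => x) (fun s => 2*s)
      (tendsto_const_mul_nhdsWithin_Ioi (by norm_num)) ?_
    filter_upwards [eventually_mem_nhdsWithin] with s hs
    have : (0:ℝ) < s := hs
    exact Metric.mem_closedBall_self (by nlinarith)
  set Bset : ℕ → ℚ → Set (Fin n → ℝ) := fun m q =>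
    {x | (x ∈ Q₀.set ∧ Tendsto (fun s : ℝ => ⨍ y in Metric.closedBall x (2*s), ‖f y‖)
        (𝓝[>] 0) (𝓝 ‖f x‖))
      ∧ ENNReal.ofReal (2*4^n*CT) * (‖f x‖₊ : ℝ≥0∞) + localGrandMaximal T Q₀ f x
          + ENNReal.ofReal (1/((m:ℝ)+1)) < ENNReal.ofReal (q:ℝ)
      ∧ ENNReal.ofReal (q:ℝ) < (‖T (Q₀.triple.set.indicator f) x‖₊ : ℝ≥0∞)} with hBdef
  have hBnull : ∀ (m : ℕ) (q : ℚ), volume (Bset m q) = 0 := by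
    intro m q
    apply density_null (fun ξ => (‖T (Q₀.triple.set.indicator f) ξ‖₊ : ℝ≥0∞)) _ q
    · exact fun x hx => hx.2.2
    · intro x hx
      exact key_estimate T CT hCT hsub hweak Q₀ f hf hx.1.1 hx.1.2 q m hx.2.1
  have hUnull : volume (⋃ (m : ℕ) (q : ℚ), Bset m q) = 0 :=
    measure_iUnion_null fun m => measure_iUnion_null fun q => hBnull m q
  filter_upwards [havg, measure_eq_zero_iff_ae_notMem.mp hUnull] with x hx hxU hxQ₀
  by_contra hcon
  rw [not_le] at hcon
  obtain ⟨q1, hq1nn, hq1l, hq1r⟩ := ENNReal.lt_iff_exists_rat_btwn.mp hcon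
  obtain ⟨q2, hq2nn, hq2l, hq2r⟩ := ENNReal.lt_iff_exists_rat_btwn.mp hq1r
  have hcoe1 : (Real.toNNReal (q1:ℝ) : ℝ≥0∞) = ENNReal.ofReal (q1:ℝ) := rfl
  have hcoe2 : (Real.toNNReal (q2:ℝ) : ℝ≥0∞) = ENNReal.ofReal (q2:ℝ) := rfl
  rw [hcoe1] at hq1l
  rw [hcoe1, hcoe2] at hq2l
  rw [hcoe2] at hq2r
  have hq1nn' : (0:ℝ) ≤ (q1:ℝ) := by exact_mod_cast hq1nn
  have hq2nn' : (0:ℝ) ≤ (q2:ℝ) := by exact_mod_cast hq2nn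
  have hq12 : (q1:ℝ) < (q2:ℝ) := by
    by_contra hle
    rw [not_lt] at hle
    exact absurd (hq2l.trans_le (ENNReal.ofReal_le_ofReal hle)) (lt_irrefl _)
  obtain ⟨m, hm⟩ := exists_nat_one_div_lt (show (0:ℝ) < (q2:ℝ) - q1 by linarith)
  apply hxU
  refine mem_iUnion.mpr ⟨m, mem_iUnion.mpr ⟨q2, ?_⟩⟩
  refine ⟨⟨hxQ₀, hx⟩, ?_, hq2r⟩
  calc ENNReal.ofReal (2*4^n*CT) * (‖f x‖₊ : ℝ≥0∞) + localGrandMaximal T Q₀ f x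
        + ENNReal.ofReal (1/((m:ℝ)+1))
      < ENNReal.ofReal (q1:ℝ) + ENNReal.ofReal ((q2:ℝ) - q1) := by
        refine ENNReal.add_lt_add hq1l ?_
        rw [ENNReal.ofReal_lt_ofReal_iff (by linarith)]
        exact hm
    _ = ENNReal.ofReal (q2:ℝ) := by
        rw [← ENNReal.ofReal_add hq1nn' (by linarith)]
        ring_nf
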